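/- Every factor of w of length 2 is a factor of the word u₀ = 23141121142; moreover w has exactly 8 distinct factors of length 2. -/

import Mathlib

/-- The four-letter alphabet `A₄ = {1,2,3,4}`; the value `k : Fin 4` represents letter `k+1`. -/
abbrev A4 := Fin 4

/-- The morphism `f` on letters: `f(1)=121, f(2)=123, f(3)=141, f(4)=142`
(letters `1,2,3,4` encoded as `0,1,2,3`). -/
def fm : A4 → List A4
  | 0 => [0, 1, 0]
  | 1 => [0, 1, 2]
  | 2 => [0, 3, 0]
  | 3 => [0, 3, 1]

/-- The morphism `f` extended to words by concatenation. -/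
def fw (u : List A4) : List A4 := u.flatMap fm

/-- The fixed point `w` of `f` starting with the letter `1`: since `|f^k(1)| = 3^k` and each
`f^k(1)` is a prefix of `f^(k+1)(1)`, the `n`-th letter of `w` is the `n`-th letter of
`f^(n+1)(1)`. -/
def w (n : ℕ) : A4 := ((fw^[n + 1]) [0]).getD n 0

/-- The finite word `t` occurs at position `i` in the infinite word `x`. -/
def OccursAt {α : Type*} (t : List α) (x : ℕ → α) (i : ℕ) : Prop :=
  t = (List.range t.length).map fun k => x (i + k)

/-- The finite word `v` is a factor of the infinite word `x`. -/
def FactorOf {α : Type*} (v : List α) (x : ℕ → α) : Prop :=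
  ∃ i, OccursAt v x i

/-- The finite word `v` has period `q ≥ 1`: `v(j) = v(j+q)` whenever `0 ≤ j < |v| - q`. -/
def HasPeriod {α : Type*} (v : List α) (q : ℕ) : Prop :=
  1 ≤ q ∧ ∀ j, j + q < v.length → v[j]? = v[j + q]?

/-- A word lies in `ker ψ` if each letter of `A₄` occurs in it a number of times
divisible by `4`. -/
def InKerPsi (u : List A4) : Prop := ∀ a : A4, 4 ∣ u.count a

/-- `q` is a kernel period of `v`: `1 ≤ q ≤ |v|`, `v` has period `q`, and the prefix of `v`
of length `q` lies in `ker ψ`. -/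
def KernelPeriod (v : List A4) (q : ℕ) : Prop :=
  q ≤ v.length ∧ HasPeriod v q ∧ InKerPsi (v.take q)

lemma fw_append (u v : List A4) : fw (u ++ v) = fw u ++ fw v :=
  List.flatMap_append

lemma fw_cons (a : A4) (u : List A4) : fw (a :: u) = fm a ++ fw u :=
  List.flatMap_cons ..

lemma fm_length : ∀ a : A4, (fm a).length = 3 := by decide

lemma fw_length (u : List A4) : (fw u).length = 3 * u.length := by
  induction u with
  | nil => rfl
  | cons a u ih => rw [fw_cons, List.length_append, fm_length, ih, List.length_cons]; ring

lemma iter_append (k : ℕ) (u v : List A4) : fw^[k] (u ++ v) = fw^[k] u ++ fw^[k] v := by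
  induction k generalizing u v with
  | zero => rfl
  | succ k ih => simp [Function.iterate_succ_apply, fw_append, ih]

lemma iter_length (k : ℕ) : (fw^[k] [0]).length = 3 ^ k := by
  induction k with
  | zero => rfl
  | succ k ih => rw [Function.iterate_succ_apply', fw_length, ih, pow_succ]; ring

lemma prefix_succ (k : ℕ) : fw^[k] [0] <+: fw^[k+1] [0] := by
  rw [Function.iterate_succ_apply]
  have : fw [0] = [0] ++ [1, 0] := by decide
  rw [this, iter_append]
  exact ⟨_, rfl⟩

lemma prefix_mono {a b : ℕ} (h : a ≤ b) : fw^[a] [0] <+: fw^[b] [0] := by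
  induction b, h using Nat.le_induction with
  | base => exact List.prefix_refl _
  | succ b hb ih => exact ih.trans (prefix_succ b)

lemma getD_prefix {l1 l2 : List A4} (h : l1 <+: l2) {n : ℕ} (hn : n < l1.length) :
    l2.getD n 0 = l1.getD n 0 := by
  obtain ⟨t, rfl⟩ := h
  exact List.getD_append _ _ _ _ hn

lemma w_eq (m n : ℕ) (h : n < 3 ^ m) : w n = (fw^[m] [0]).getD n 0 := by
  have hn : n < 3 ^ (n + 1) := lt_of_lt_of_le (Nat.lt_pow_self (n := n) (by norm_num))
    (Nat.pow_le_pow_right (by norm_num) (Nat.le_succ n))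
  show (fw^[n+1] [0]).getD n 0 = _
  rcases le_total m (n + 1) with hm | hm
  · exact getD_prefix (prefix_mono hm) (by rwa [iter_length])
  · exact (getD_prefix (prefix_mono hm) (by rwa [iter_length])).symm

lemma fw_getD (u : List A4) (n : ℕ) (h : n < 3 * u.length) :
    (fw u).getD n 0 = (fm (u.getD (n / 3) 0)).getD (n % 3) 0 := by
  induction u generalizing n with
  | nil => simp at h
  | cons a u ih =>
    rw [fw_cons]
    by_cases hn : n < 3
    · rw [List.getD_append _ _ _ _ (by rw [fm_length]; exact hn)]
      have h1 : n / 3 = 0 := by omega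
      have h2 : n % 3 = n := by omega
      rw [h1, h2]; rfl
    · push_neg at hn
      rw [List.getD_append_right _ _ _ _ (by rw [fm_length]; exact hn), fm_length]
      rw [ih (n - 3) (by simp at h ⊢; omega)]
      have h1 : (n - 3) / 3 = n / 3 - 1 := by omega
      have h2 : (n - 3) % 3 = n % 3 := by omega
      have h3 : 1 ≤ n / 3 := by omega
      rw [h1, h2]
      congr 2
      rcases Nat.exists_eq_add_of_le h3 with ⟨j, hj⟩
      rw [hj, Nat.add_comm 1 j]; simp

lemma w_rec (n : ℕ) : w n = (fm (w (n / 3))).getD (n % 3) 0 := by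
  have hn : n < 3 ^ (n + 1) := lt_of_lt_of_le (Nat.lt_pow_self (n := n) (by norm_num))
    (Nat.pow_le_pow_right (by norm_num) (Nat.le_succ n))
  rw [w_eq (n + 2) n (lt_of_lt_of_le hn (Nat.pow_le_pow_right (by norm_num) (by omega))),
    Function.iterate_succ_apply', fw_getD _ _ (by rw [iter_length]; rw [pow_succ] at hn; omega),
    ← w_eq (n + 1) (n / 3) (lt_of_le_of_lt (Nat.div_le_self n 3) hn)]

def L8 : List (List A4) := [[0,1],[1,0],[0,0],[1,2],[2,0],[0,3],[3,0],[3,1]]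

lemma pair_mem (i : ℕ) : [w i, w (i + 1)] ∈ L8 := by
  have h0 := w_rec i
  have h1 := w_rec (i + 1)
  have hr : i % 3 = 0 ∨ i % 3 = 1 ∨ i % 3 = 2 := by omega
  rcases hr with hr | hr | hr
  · have e1 : (i + 1) / 3 = i / 3 := by omega
    have e2 : (i + 1) % 3 = 1 := by omega
    rw [h0, h1, e1, e2, hr]
    generalize w (i / 3) = a
    revert a; decide
  · have e1 : (i + 1) / 3 = i / 3 := by omega
    have e2 : (i + 1) % 3 = 2 := by omega
    rw [h0, h1, e1, e2, hr]
    generalize w (i / 3) = a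
    revert a; decide
  · have e1 : (i + 1) / 3 = i / 3 + 1 := by omega
    have e2 : (i + 1) % 3 = 0 := by omega
    rw [h0, h1, e1, e2, hr]
    generalize w (i / 3) = a
    generalize w (i / 3 + 1) = b
    revert a b; decide

lemma occ2 (i : ℕ) : FactorOf [w i, w (i + 1)] w := by
  refine ⟨i, ?_⟩
  show _ = (List.range 2).map _
  simp [List.range_succ]

lemma factor_form {v : List A4} (hf : FactorOf v w) (hl : v.length = 2) :
    ∃ i, v = [w i, w (i + 1)] := by
  obtain ⟨i, ho⟩ := hf
  refine ⟨i, ?_⟩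
  rw [ho, hl] at *
  simp [List.range_succ]

lemma mem_L8 {v : List A4} (hf : FactorOf v w) (hl : v.length = 2) : v ∈ L8 := by
  obtain ⟨i, rfl⟩ := factor_form hf hl
  exact pair_mem i

lemma w_small (n : ℕ) (h : n < 81) : w n = (fw^[4] [0]).getD n 0 :=
  w_eq 4 n (by norm_num; omega)

lemma pair_factor (a b : A4) (i : ℕ) (hi : i < 80)
    (ha : (fw^[4] [0]).getD i 0 = a) (hb : (fw^[4] [0]).getD (i + 1) 0 = b) :
    FactorOf [a, b] w := by
  have := occ2 i
  rwa [w_small i (by omega), w_small (i + 1) (by omega), ha, hb] at this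

lemma all_factors {v : List A4} (hv : v ∈ L8) : FactorOf v w ∧ v.length = 2 := by
  fin_cases hv
  · exact ⟨pair_factor _ _ 0 (by norm_num) (by decide) (by decide), rfl⟩
  · exact ⟨pair_factor _ _ 1 (by norm_num) (by decide) (by decide), rfl⟩
  · exact ⟨pair_factor _ _ 2 (by norm_num) (by decide) (by decide), rfl⟩
  · exact ⟨pair_factor _ _ 4 (by norm_num) (by decide) (by decide), rfl⟩
  · exact ⟨pair_factor _ _ 5 (by norm_num) (by decide) (by decide), rfl⟩
  · exact ⟨pair_factor _ _ 15 (by norm_num) (by decide) (by decide), rfl⟩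
  · exact ⟨pair_factor _ _ 16 (by norm_num) (by decide) (by decide), rfl⟩
  · exact ⟨pair_factor _ _ 49 (by norm_num) (by decide) (by decide), rfl⟩


/-- Every factor of `w` of length 2 is a factor of `u₀ = 23141121142` (encoded with letters
`1,2,3,4` as `0,1,2,3`), and `w` has exactly 8 distinct factors of length 2. -/
theorem stmt13 :
    (∀ v : List A4, FactorOf v w → v.length = 2 →
      v <:+: ([1, 2, 0, 3, 0, 0, 1, 0, 0, 3, 1] : List A4)) ∧
    {v : List A4 | FactorOf v w ∧ v.length = 2}.ncard = 8 := by
  constructor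
  · intro v hf hl
    have hm := mem_L8 hf hl
    revert hm
    have : ∀ v ∈ L8, v <:+: ([1, 2, 0, 3, 0, 0, 1, 0, 0, 3, 1] : List A4) := by decide
    exact this v
  · have hS : {v : List A4 | FactorOf v w ∧ v.length = 2} = ↑L8.toFinset := by
      ext v
      simp only [Set.mem_setOf_eq, Finset.coe_sort_coe, List.coe_toFinset, Set.mem_setOf_eq]
      exact ⟨fun ⟨hf, hl⟩ => mem_L8 hf hl, all_factors⟩
    rw [hS, Set.ncard_coe_finset]
    decide
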